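/- Let U_1, …, U_m be closed convex polyhedra in ℝ^d with ⋂_{j=1}^m U_j ≠ ∅. Then for every δ > 0 there exists ε > 0 such that ⋂_{j=1}^m B(U_j, ε) ⊆ B(⋂_{j=1}^m U_j, δ). -/

import Mathlib

/-- A (closed convex) polyhedron in Euclidean space `ℝ^d`: an intersection of finitely many
closed halfspaces `{x : ⟨a, x⟩ ≤ b}`. -/
def IsEuclideanPolyhedron {d : ℕ} (S : Set (EuclideanSpace ℝ (Fin d))) : Prop :=
  ∃ (m : ℕ) (a : Fin m → EuclideanSpace ℝ (Fin d)) (b : Fin m → ℝ),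
    S = {x | ∀ i, ∑ j, a i j * x j ≤ b i}

open Filter Metric
open scoped RealInnerProductSpace Topology

private lemma euc_inner_eq {d : ℕ} (a x : EuclideanSpace ℝ (Fin d)) :
    ⟪a, x⟫ = ∑ j, a j * x j := by
  simp [PiLp.inner_apply, RCLike.inner_apply, mul_comm]

set_option maxHeartbeats 1000000 in
/-- Hoffman-type error bound (non-uniform version), proved by strong induction on the
number of constraints. -/
private lemma hoffman_aux (d : ℕ) : ∀ (N : ℕ) (ι : Type) (_ : Fintype ι)
    (a : ι → EuclideanSpace ℝ (Fin d)) (b : ι → ℝ), Fintype.card ι ≤ N →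
    {x : EuclideanSpace ℝ (Fin d) | ∀ i, ⟪a i, x⟫ ≤ b i}.Nonempty →
    ∀ δ : ℝ, 0 < δ →
    ∃ ε > 0, ∀ x : EuclideanSpace ℝ (Fin d), (∀ i, ⟪a i, x⟫ ≤ b i + ε) →
      Metric.infDist x {y : EuclideanSpace ℝ (Fin d) | ∀ i, ⟪a i, y⟫ ≤ b i} < δ := by
  intro N
  induction N with
  | zero =>
    intro ι inst a b hcard hne δ hδ
    haveI : IsEmpty ι := Fintype.card_eq_zero_iff.mp (le_antisymm hcard (Nat.zero_le _))
    refine ⟨1, one_pos, fun x _ => ?_⟩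
    have hx : x ∈ {y : EuclideanSpace ℝ (Fin d) | ∀ i, ⟪a i, y⟫ ≤ b i} :=
      fun i => isEmptyElim i
    calc Metric.infDist x _ ≤ dist x x := Metric.infDist_le_dist_of_mem hx
      _ = 0 := dist_self x
      _ < δ := hδ
  | succ N IH =>
    intro ι inst a b hcard hne δ hδ
    by_contra hcon
    push_neg at hcon
    set P := {y : EuclideanSpace ℝ (Fin d) | ∀ i, ⟪a i, y⟫ ≤ b i} with hPdef
    obtain ⟨p0, hp0⟩ := hne
    have hseq : ∀ n : ℕ, ∃ x : EuclideanSpace ℝ (Fin d),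
        (∀ i, ⟪a i, x⟫ ≤ b i + 1 / (n + 1)) ∧ δ ≤ Metric.infDist x P := by
      intro n
      obtain ⟨x, h1, h2⟩ := hcon (1 / (n + 1)) (by positivity)
      exact ⟨x, h1, h2⟩
    choose x hx hdist using hseq
    set K : Submodule ℝ (EuclideanSpace ℝ (Fin d)) :=
      ⨅ i, LinearMap.ker ((innerSL ℝ (a i) : EuclideanSpace ℝ (Fin d) →L[ℝ] ℝ) : EuclideanSpace ℝ (Fin d) →ₗ[ℝ] ℝ) with hKdef
    have memK : ∀ v, v ∈ K ↔ ∀ i, ⟪a i, v⟫ = 0 := by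
      intro v
      simp [hKdef, Submodule.mem_iInf, LinearMap.mem_ker]
    set y : ℕ → EuclideanSpace ℝ (Fin d) :=
      fun n => x n - (K.orthogonalProjectionOnto (x n) : EuclideanSpace ℝ (Fin d)) with hydef
    have hyK : ∀ n, y n ∈ Kᗮ := fun n => K.sub_starProjection_mem_orthogonal (x n)
    have hprojK : ∀ n i, ⟪a i, ((K.orthogonalProjectionOnto (x n) : EuclideanSpace ℝ (Fin d)))⟫ = 0 :=
      fun n i => (memK _).mp (K.orthogonalProjectionOnto (x n)).2 i
    have hinner : ∀ i n, ⟪a i, y n⟫ = ⟪a i, x n⟫ := by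
      intro i n
      simp [hydef, inner_sub_right, hprojK n i, -Submodule.coe_orthogonalProjectionOnto_apply]
    have hyb : ∀ n i, ⟪a i, y n⟫ ≤ b i + 1 / (n + 1) := fun n i => by
      rw [hinner i n]; exact hx n i
    have hydist : ∀ n, δ ≤ Metric.infDist (y n) P := by
      intro n
      by_contra hlt
      push_neg at hlt
      obtain ⟨p, hp, hpd⟩ := (Metric.infDist_lt_iff ⟨p0, hp0⟩).mp hlt
      have hkey : δ ≤ dist (y n) p := ?_
      · linarith
      have hmem : p + (K.orthogonalProjectionOnto (x n) : EuclideanSpace ℝ (Fin d)) ∈ P := by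
        intro i
        simpa [inner_add_right, hprojK n i, -Submodule.coe_orthogonalProjectionOnto_apply] using hp i
      calc δ ≤ Metric.infDist (x n) P := hdist n
        _ ≤ dist (x n) (p + (K.orthogonalProjectionOnto (x n) : EuclideanSpace ℝ (Fin d))) :=
            Metric.infDist_le_dist_of_mem hmem
        _ = dist (y n) p := by
            rw [dist_eq_norm, dist_eq_norm, hydef]
            congr 1
            rw [sub_add_eq_sub_sub, sub_right_comm]
    by_cases hbdd : ∃ C : ℝ, ∃ᶠ n in atTop, ‖y n‖ ≤ C
    · -- bounded case: a subsequence converges to a point of P, contradicting δ ≤ infDist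
      obtain ⟨C, hC⟩ := hbdd
      obtain ⟨φ, hφ, hφC⟩ := Filter.extraction_of_frequently_atTop hC
      have hsub : ∀ n, y (φ n) ∈ Metric.closedBall (0 : EuclideanSpace ℝ (Fin d)) C := by
        intro n; simpa [Metric.mem_closedBall, dist_zero_right] using hφC n
      obtain ⟨a0, _, ψ, hψ, hlim⟩ :=
        tendsto_subseq_of_bounded (Metric.isBounded_closedBall (x := (0:EuclideanSpace ℝ (Fin d))) (r := C)) hsub
      have ha0P : a0 ∈ P := by
        intro i
        have h1 : Tendsto (fun n => ⟪a i, y (φ (ψ n))⟫) atTop (𝓝 ⟪a i, a0⟫) :=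
          ((innerSL ℝ (a i)).continuous.tendsto a0).comp hlim
        have h2 : Tendsto (fun n : ℕ => b i + 1 / (n + 1)) atTop (𝓝 (b i)) := by
          have : Tendsto (fun n : ℕ => 1 / ((n : ℝ) + 1)) atTop (𝓝 0) :=
            tendsto_one_div_add_atTop_nhds_zero_nat
          simpa using tendsto_const_nhds.add this
        refine le_of_tendsto_of_tendsto' h1 h2 (fun n => ?_)
        calc ⟪a i, y (φ (ψ n))⟫ ≤ b i + 1 / (φ (ψ n) + 1) := hyb _ i
          _ ≤ b i + 1 / (n + 1) := by
              have hle : (n : ℝ) ≤ (φ (ψ n) : ℝ) := by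
                exact_mod_cast ((hφ.comp hψ).le_apply)
              have : (1 : ℝ) / (φ (ψ n) + 1) ≤ 1 / (n + 1) := by
                apply one_div_le_one_div_of_le <;> nlinarith [(n.cast_nonneg : (0:ℝ) ≤ n)]
              linarith
      have hdist0 : Tendsto (fun n => dist (y (φ (ψ n))) a0) atTop (𝓝 0) :=
        tendsto_iff_dist_tendsto_zero.mp hlim
      have hge : ∀ n, δ ≤ dist (y (φ (ψ n))) a0 := fun n =>
        le_trans (hydist _) (Metric.infDist_le_dist_of_mem ha0P)
      have : δ ≤ 0 := ge_of_tendsto hdist0 (Eventually.of_forall hge)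
      linarith
    · -- unbounded case
      push_neg at hbdd
      have hbt : Tendsto (fun n => ‖y n‖) atTop atTop := by
        rw [Filter.tendsto_atTop]
        intro C
        have h := hbdd C
        filter_upwards [h] with n hn
        exact hn.le
      set u : ℕ → EuclideanSpace ℝ (Fin d) := fun n => ‖y n‖⁻¹ • y n with hudef
      have hu1 : ∀ n, u n ∈ Metric.closedBall (0 : EuclideanSpace ℝ (Fin d)) 1 := by
        intro n
        simp only [Metric.mem_closedBall, dist_zero_right, hudef, norm_smul, norm_inv, norm_norm]
        rcases eq_or_ne (y n) 0 with h | h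
        · simp [h]
        · rw [inv_mul_cancel₀ (norm_ne_zero_iff.mpr h)]
      obtain ⟨w, _, φ, hφ, hlim⟩ :=
        tendsto_subseq_of_bounded (Metric.isBounded_closedBall (x := (0:EuclideanSpace ℝ (Fin d))) (r := 1)) hu1
      have hnφ : Tendsto (fun n => ‖y (φ n)‖) atTop atTop := hbt.comp hφ.tendsto_atTop
      have hyne : ∀ᶠ n in atTop, y (φ n) ≠ 0 := by
        filter_upwards [hnφ.eventually_ge_atTop 1] with n hn
        intro h0
        rw [h0, norm_zero] at hn
        linarith
      have hw1 : ‖w‖ = 1 := by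
        have ht : Tendsto (fun n => ‖u (φ n)‖) atTop (𝓝 ‖w‖) :=
          (continuous_norm.tendsto w).comp hlim
        have hev : (fun n => ‖u (φ n)‖) =ᶠ[atTop] (fun _ => (1:ℝ)) := by
          filter_upwards [hyne] with n hn
          simp [hudef, norm_smul, norm_inv, norm_norm,
            inv_mul_cancel₀ (norm_ne_zero_iff.mpr hn)]
        exact tendsto_nhds_unique (ht.congr' hev) tendsto_const_nhds
      have hwKo : w ∈ Kᗮ := by
        have hclosed : IsClosed (Kᗮ : Set (EuclideanSpace ℝ (Fin d))) :=
          Submodule.closed_of_finiteDimensional _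
        exact hclosed.mem_of_tendsto hlim
          (Eventually.of_forall fun n => Kᗮ.smul_mem _ (hyK (φ n)))
      have hwle : ∀ i, ⟪a i, w⟫ ≤ 0 := by
        intro i
        have h1 : Tendsto (fun n => ⟪a i, u (φ n)⟫) atTop (𝓝 ⟪a i, w⟫) :=
          ((innerSL ℝ (a i)).continuous.tendsto w).comp hlim
        have h2 : Tendsto (fun n => ‖y (φ n)‖⁻¹ * (b i + 1)) atTop (𝓝 0) := by
          simpa using (tendsto_inv_atTop_zero.comp hnφ).mul_const (b i + 1)
        refine le_of_tendsto_of_tendsto h1 h2 ?_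
        filter_upwards [hnφ.eventually_ge_atTop 1] with n hn
        have hpos : (0:ℝ) < ‖y (φ n)‖ := by linarith
        have hb1 : ⟪a i, y (φ n)⟫ ≤ b i + 1 := by
          have := hyb (φ n) i
          have h01 : (1:ℝ) / (φ n + 1) ≤ 1 := by
            rw [div_le_one (by positivity)]
            nlinarith [((φ n).cast_nonneg : (0:ℝ) ≤ (φ n : ℝ))]
          linarith
        have : ⟪a i, u (φ n)⟫ = ‖y (φ n)‖⁻¹ * ⟪a i, y (φ n)⟫ := by
          simp [hudef, inner_smul_right]
        rw [this]
        exact mul_le_mul_of_nonneg_left hb1 (inv_nonneg.mpr hpos.le)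
      have hex : ∃ i0, ⟪a i0, w⟫ < 0 := by
        by_contra hno
        push_neg at hno
        have hwK : w ∈ K := (memK w).mpr fun i => le_antisymm (hwle i) (hno i)
        have : ⟪w, w⟫ = 0 := (Submodule.mem_orthogonal K w).mp hwKo w hwK
        have : w = 0 := inner_self_eq_zero.mp this
        rw [this, norm_zero] at hw1
        exact zero_ne_one hw1
      obtain ⟨i0, hi0⟩ := hex
      letI := Classical.decPred (fun i : ι => ⟪a i, w⟫ = 0)
      set ι0 := {i : ι // ⟪a i, w⟫ = 0} with hι0def
      have hcard0 : Fintype.card ι0 ≤ N := by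
        have hlt : Fintype.card ι0 < Fintype.card ι :=
          Fintype.card_subtype_lt (x := i0) (by intro h; rw [h] at hi0; exact lt_irrefl 0 hi0)
        omega
      have hP0ne : {z : EuclideanSpace ℝ (Fin d) | ∀ i : ι0, ⟪a i.1, z⟫ ≤ b i.1}.Nonempty :=
        ⟨p0, fun i => hp0 i.1⟩
      obtain ⟨ε0, hε0, hQ⟩ := IH ι0 inferInstance (fun i => a i.1) (fun i => b i.1)
        hcard0 hP0ne (δ/2) (half_pos hδ)
      -- eventualities
      have hev1 : ∀ᶠ n in atTop, (1:ℝ) / (φ n + 1) ≤ ε0 := by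
        obtain ⟨N0, hN0⟩ := exists_nat_one_div_lt hε0
        rw [eventually_atTop]
        refine ⟨N0, fun n hn => ?_⟩
        have h1 : (N0 : ℝ) ≤ (φ n : ℝ) := by
          exact_mod_cast le_trans hn hφ.le_apply
        have : (1:ℝ) / (φ n + 1) ≤ 1 / (N0 + 1) := by
          apply one_div_le_one_div_of_le <;> nlinarith [(N0.cast_nonneg : (0:ℝ) ≤ (N0:ℝ))]
        linarith [hN0.le]
      have hev2 : ∀ᶠ n in atTop, ∀ i, ⟪a i, w⟫ < 0 →
          ⟪a i, y (φ n)⟫ ≤ b i - ‖a i‖ * (δ/2) := by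
        rw [eventually_all]
        intro i
        by_cases hneg : ⟪a i, w⟫ < 0
        · have hten : Tendsto (fun n => ⟪a i, y (φ n)⟫) atTop atBot := by
            have h1 : Tendsto (fun n => ‖y (φ n)‖ * ⟪a i, u (φ n)⟫) atTop atBot :=
              hnφ.atTop_mul_neg hneg (((innerSL ℝ (a i)).continuous.tendsto w).comp hlim)
            refine h1.congr' ?_
            filter_upwards [hyne] with n hn
            rw [hudef]
            simp only [inner_smul_right]
            rw [← mul_assoc, mul_inv_cancel₀ (norm_ne_zero_iff.mpr hn), one_mul]
          filter_upwards [hten.eventually_le_atBot (b i - ‖a i‖ * (δ/2))] with n hn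
          exact fun _ => hn
        · filter_upwards with n hn
          exact absurd hn hneg
      obtain ⟨n, hn1, hn2⟩ := (hev1.and hev2).exists
      -- the point y (φ n) nearly satisfies the I0-constraints
      have hQx : ∀ i : ι0, ⟪a i.1, y (φ n)⟫ ≤ b i.1 + ε0 := fun i =>
        le_trans (hyb (φ n) i.1) (by linarith)
      have hinf0 := hQ (y (φ n)) hQx
      obtain ⟨q, hq0, hqd⟩ := (Metric.infDist_lt_iff hP0ne).mp hinf0
      have hqP : q ∈ P := by
        intro i
        rcases (hwle i).lt_or_eq with hneg | h0
        case inr => exact hq0 ⟨i, h0⟩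
        · have h1 : ⟪a i, y (φ n)⟫ ≤ b i - ‖a i‖ * (δ/2) := hn2 i hneg
          have h2 : ⟪a i, q - y (φ n)⟫ ≤ ‖a i‖ * ‖q - y (φ n)‖ := real_inner_le_norm _ _
          have h3 : ‖q - y (φ n)‖ ≤ δ/2 := by
            rw [← dist_eq_norm, dist_comm]
            exact hqd.le
          have h4 : ‖a i‖ * ‖q - y (φ n)‖ ≤ ‖a i‖ * (δ/2) :=
            mul_le_mul_of_nonneg_left h3 (norm_nonneg _)
          have h5 : ⟪a i, q⟫ = ⟪a i, y (φ n)⟫ + ⟪a i, q - y (φ n)⟫ := by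
            rw [← inner_add_right]
            congr 1
            abel
          linarith
      have : Metric.infDist (y (φ n)) P < δ := by
        calc Metric.infDist (y (φ n)) P ≤ dist (y (φ n)) q := Metric.infDist_le_dist_of_mem hqP
          _ < δ/2 := hqd
          _ < δ := by linarith
      linarith [hydist (φ n)]

/-- For closed convex polyhedra `U₁, …, U_m` with nonempty intersection and
any `δ > 0`, some `ε > 0` satisfies `⋂ⱼ B(Uⱼ, ε) ⊆ B(⋂ⱼ Uⱼ, δ)`. -/
theorem thickened_intersection_subset_thickening_of_intersection
    {d m : ℕ} (U : Fin m → Set (EuclideanSpace ℝ (Fin d)))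
    (hpoly : ∀ j, IsEuclideanPolyhedron (U j))
    (hne : (⋂ j, U j).Nonempty) (δ : ℝ) (hδ : 0 < δ) :
    ∃ ε > 0, (⋂ j, Metric.thickening ε (U j)) ⊆ Metric.thickening δ (⋂ j, U j) := by
  choose mj aj bj hU using hpoly
  set ι := (j : Fin m) × Fin (mj j) with hιdef
  set A : ι → EuclideanSpace ℝ (Fin d) := fun i => aj i.1 i.2 with hA
  set B : ι → ℝ := fun i => bj i.1 i.2 with hB
  have hPeq : (⋂ j, U j) = {y : EuclideanSpace ℝ (Fin d) | ∀ i : ι, ⟪A i, y⟫ ≤ B i} := by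
    ext z
    constructor
    · intro hz i
      have hzj := Set.mem_iInter.mp hz i.1
      rw [hU i.1] at hzj
      show ⟪A i, z⟫ ≤ B i
      rw [hA, hB, euc_inner_eq]
      exact hzj i.2
    · intro hz
      rw [Set.mem_iInter]
      intro j
      rw [hU j]
      intro i
      have hh : ⟪A ⟨j, i⟩, z⟫ ≤ B ⟨j, i⟩ := hz ⟨j, i⟩
      rwa [hA, hB, euc_inner_eq] at hh
  have hne' : {y : EuclideanSpace ℝ (Fin d) | ∀ i : ι, ⟪A i, y⟫ ≤ B i}.Nonempty := by
    rwa [hPeq] at hne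
  obtain ⟨ε0, hε0, hQ⟩ := hoffman_aux d (Fintype.card ι) ι inferInstance A B le_rfl hne' δ hδ
  set S := ∑ i : ι, ‖A i‖ with hS
  have hS0 : 0 ≤ S := Finset.sum_nonneg fun i _ => norm_nonneg _
  refine ⟨ε0 / (1 + S), by positivity, fun x hx => ?_⟩
  have hxin : ∀ i : ι, ⟪A i, x⟫ ≤ B i + ε0 := by
    intro i
    have hxj : x ∈ Metric.thickening (ε0 / (1 + S)) (U i.1) := by
      have := Set.mem_iInter.mp hx i.1
      exact this
    obtain ⟨z, hz, hdz⟩ := Metric.mem_thickening_iff.mp hxj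
    have hzc : ⟪A i, z⟫ ≤ B i := by
      rw [hA, hB, euc_inner_eq]
      have := hz
      rw [hU i.1] at this
      exact this i.2
    have h1 : ⟪A i, x - z⟫ ≤ ‖A i‖ * ‖x - z‖ := real_inner_le_norm _ _
    have h2 : ‖x - z‖ ≤ ε0 / (1 + S) := by
      rw [← dist_eq_norm]
      exact hdz.le
    have h3 : ‖A i‖ * ‖x - z‖ ≤ ‖A i‖ * (ε0 / (1 + S)) :=
      mul_le_mul_of_nonneg_left h2 (norm_nonneg _)
    have h4 : ‖A i‖ * (ε0 / (1 + S)) ≤ ε0 := by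
      have hle : ‖A i‖ ≤ S := Finset.single_le_sum (f := fun i : ι => ‖A i‖)
        (fun i _ => norm_nonneg _) (Finset.mem_univ i)
      rw [mul_div_assoc'] -- ‖A i‖ * ε0 / (1+S)
      rw [div_le_iff₀ (by positivity)]
      nlinarith
    have h5 : ⟪A i, x⟫ = ⟪A i, z⟫ + ⟪A i, x - z⟫ := by
      rw [← inner_add_right]
      congr 1
      abel
    linarith
  have hlt := hQ x hxin
  rw [Metric.mem_thickening_iff_infDist_lt hne, hPeq]
  exact hlt
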